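/- Let T = ℕ, let G be a filtration on Ω, let P be a complete probability measure whose domain includes G_∞, and let S be a stopping time of the completed filtration Ḡ^P (where Ḡ^P_n = G_n ∨ N, N the P-null sets). Then there exists a stopping time S' of G with S = S' P-almost surely. -/

import Mathlib

open MeasureTheory Set

variable {Ω : Type*}

/-- The completion of a (discrete-time) filtration `G` by the null sets of `P`. -/
def complFilt [MeasurableSpace Ω] (G : ℕ → MeasurableSpace Ω) (P : Measure Ω) :
    ℕ → MeasurableSpace Ω :=
  fun n => G n ⊔ MeasurableSpace.generateFrom {A : Set Ω | P A = 0}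

lemma complFilt_approx [MeasurableSpace Ω] (G : ℕ → MeasurableSpace Ω) (P : Measure Ω)
    (n : ℕ) {A : Set Ω} (hA : MeasurableSet[complFilt G P n] A) :
    ∃ B, MeasurableSet[G n] B ∧ A =ᵐ[P] B := by
  have hle : complFilt G P n ≤ eventuallyMeasurableSpace (G n) (ae P) := by
    apply sup_le
    · intro s hs
      exact ⟨s, hs, Filter.EventuallyEq.refl _ _⟩
    · apply MeasurableSpace.generateFrom_le
      intro s hs
      exact ⟨∅, @MeasurableSet.empty _ (G n), (ae_eq_empty).mpr hs⟩
  exact hle _ hA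

lemma enat_eq_of_forall_le_iff {a b : ℕ∞} (h : ∀ n : ℕ, a ≤ n ↔ b ≤ n) : a = b := by
  cases a with
  | top =>
    cases b with
    | top => rfl
    | coe mb => exact absurd ((h mb).mpr le_rfl) (by simp)
  | coe ma =>
    cases b with
    | top => exact absurd ((h ma).mp le_rfl) (by simp)
    | coe mb =>
      have h' : ∀ n : ℕ, ma ≤ n ↔ mb ≤ n := by
        intro n; simpa using h n
      have : ma = mb := le_antisymm ((h' mb).mpr le_rfl) ((h' ma).mp le_rfl)
      exact_mod_cast this

/-- Every stopping time of the completed filtration `Ḡ^P` is `P`-a.s. equal to a stopping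
time of `G` itself (discrete time). -/
theorem stmt_7 {m : MeasurableSpace Ω} (G : ℕ → MeasurableSpace Ω)
    (hmono : Monotone G) (hle : ∀ n, G n ≤ m)
    (P : Measure Ω) [IsProbabilityMeasure P] [P.IsComplete]
    (S : Ω → ℕ∞)
    (hS : ∀ n : ℕ, MeasurableSet[complFilt G P n] {ω | S ω ≤ (n : ℕ∞)}) :
    ∃ S' : Ω → ℕ∞, (∀ n : ℕ, MeasurableSet[G n] {ω | S' ω ≤ (n : ℕ∞)}) ∧ S =ᵐ[P] S' := by
  classical
  choose B hBmeas hBeq using fun n => complFilt_approx G P n (hS n)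
  -- monotone approximations
  set C : ℕ → Set Ω := fun n => ⋃ k ≤ n, B k with hC
  have hCmono : Monotone C := by
    intro a b hab
    apply Set.biUnion_subset_biUnion_left
    intro k hk
    exact le_trans hk hab
  have hCmeas : ∀ n, MeasurableSet[G n] (C n) := by
    intro n
    apply MeasurableSet.biUnion (Set.to_countable _)
    intro k hk
    exact hmono hk _ (hBmeas k)
  have hCeq : ∀ n : ℕ, ({ω | S ω ≤ (n : ℕ∞)} : Set Ω) =ᵐ[P] C n := by
    intro n
    have h1 : ({ω | S ω ≤ (n : ℕ∞)} : Set Ω) = ⋃ k ∈ {k : ℕ | k ≤ n}, {ω | S ω ≤ (k : ℕ∞)} := by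
      ext ω
      simp only [Set.mem_setOf_eq, Set.mem_iUnion, exists_prop]
      constructor
      · intro h; exact ⟨n, le_rfl, h⟩
      · rintro ⟨k, hk, h⟩; exact h.trans (by exact_mod_cast hk)
    have h2 : C n = ⋃ k ∈ {k : ℕ | k ≤ n}, B k := rfl
    rw [h1, h2, Set.biUnion_eq_iUnion, Set.biUnion_eq_iUnion]
    exact EventuallyEq.countable_iUnion fun i => hBeq i
  -- define S'
  set S' : Ω → ℕ∞ := fun ω =>
    if h : ∃ n, ω ∈ C n then ((Nat.find h : ℕ) : ℕ∞) else ⊤ with hS'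
  have key : ∀ (ω : Ω) (n : ℕ), S' ω ≤ (n : ℕ∞) ↔ ω ∈ C n := by
    intro ω n
    simp only [hS']
    by_cases h : ∃ k, ω ∈ C k
    · rw [dif_pos h]
      constructor
      · intro hle'
        have : Nat.find h ≤ n := by exact_mod_cast hle'
        exact hCmono this (Nat.find_spec h)
      · intro hn
        exact_mod_cast Nat.find_min' h hn
    · rw [dif_neg h]
      simp only [top_le_iff]
      constructor
      · intro hh; exact absurd hh (by simp)
      · intro hn; exact absurd ⟨n, hn⟩ h
  refine ⟨S', fun n => ?_, ?_⟩
  · have : {ω | S' ω ≤ (n : ℕ∞)} = C n := by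
      ext ω; exact key ω n
    rw [this]; exact hCmeas n
  · have hae : ∀ᵐ ω ∂P, ∀ n : ℕ, S ω ≤ (n : ℕ∞) ↔ ω ∈ C n := by
      rw [ae_all_iff]
      intro n
      exact (Filter.eventuallyEq_set.mp (hCeq n))
    filter_upwards [hae] with ω hω
    exact enat_eq_of_forall_le_iff fun n => (hω n).trans (key ω n).symm
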